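/- Let A be a k-algebra with an automorphism t of order dividing n (e.g. the cyclic permutation on A^{⊗n}). Then the composite ν∘ξ where ξ is first the symmetrization [x] ↦ (1/|G|)Σ_{h ∈ G} h·x followed by Σ_g ξ_g, and ν is the untwisting chain map, equals the identity on the coinvariant complex (⊕_{g ∈ G} C_•(A; A_g))_G. -/
import Mathlib


open scoped TensorProduct
open PiTensorProduct

section

variable (k : Type) [CommRing k] (A : Type) [Ring A] [Algebra k A]
variable (G : Type) [Group G] [Fintype G] [DecidableEq G]
variable (act : G →* (A ≃ₐ[k] A))

/-- The Hochschild-type differential evaluated on an elementary `(m+1)`-tuple: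
the alternating sum of the face maps (merging adjacent entries using the
multiplication `mulB`) together with the cyclic face, in which the last entry
is first twisted by `tw` and then multiplied onto the zeroth entry. -/
noncomputable def tupleD {B : Type} [AddCommGroup B] [Module k B]
    (mulB : B → B → B) (tw : B → B) {m : ℕ} (v : Fin (m + 1) → B) :
    ⨂[k]^m B :=
  (∑ i : Fin m, ((-1 : ℤ) ^ (i : ℕ)) •
      tprod k (fun j : Fin m =>
        if (j : ℕ) < (i : ℕ) then v (Fin.castSucc j)
        else if (j : ℕ) = (i : ℕ) then mulB (v (Fin.castSucc j)) (v (Fin.succ j))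
        else v (Fin.succ j)))
  + ((-1 : ℤ) ^ m) •
      tprod k (fun j : Fin m =>
        if (j : ℕ) = 0 then mulB (tw (v (Fin.last m))) (v 0)
        else v (Fin.castSucc j))

/-- `tailProd x j = σ_j ⋯ σ_m`, the ordered product of the group components of
an elementary chain from position `j` on. -/
def tailProd {m : ℕ} (x : Fin m → A × G) (j : ℕ) : G :=
  ((List.ofFn fun i => (x i).2).drop j).prod

/-- The untwisting map `ν` on an elementary Hochschild chain of `A ⋊ G`:
`(a_0, σ_0) ⊗ ⋯ ⊗ (a_m, σ_m)` is sent to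
`(σ_0⋯σ_m)⁻¹(a_0) ⊗ ⋯ ⊗ σ_m⁻¹(a_m)` in the summand `g = (σ_0⋯σ_m)⁻¹`. -/
noncomputable def nuTup {m : ℕ} (x : Fin (m + 1) → A × G) :
    G → ⨂[k]^(m + 1) A :=
  fun g => if g = (tailProd A G x 0)⁻¹
    then tprod k (fun j : Fin (m + 1) => act ((tailProd A G x (j : ℕ))⁻¹) ((x j).1))
    else 0

/-- The `G`-action on `⊕_{g ∈ G} C_•(A; A_g)`. -/
noncomputable def gact {ℓ : ℕ} (h : G) (f : G → ⨂[k]^ℓ A) : G → ⨂[k]^ℓ A :=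
  fun g => PiTensorProduct.map (fun _ => (act h).toLinearMap) (f (h⁻¹ * g * h))

/-- The submodule by which one quotients to obtain the `G`-coinvariants of
`⊕_{g ∈ G} C_•(A; A_g)`. -/
noncomputable def coinvSub (ℓ : ℕ) : Submodule k (G → ⨂[k]^ℓ A) :=
  Submodule.span k {x | ∃ (h : G) (f : G → ⨂[k]^ℓ A), x = f - gact k A G act h f}

/-- `ξ_g` on an elementary chain, written with values in elementary pairs of
`A ⋊ G`: `a_0 ⊗ ⋯ ⊗ a_m ↦ (g⁻¹(a_0), g⁻¹) ⊗ (a_1, 1) ⊗ ⋯ ⊗ (a_m, 1)`. -/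
def xiPair (g : G) {m : ℕ} (a : Fin (m + 1) → A) : Fin (m + 1) → A × G :=
  fun j => if (j : ℕ) = 0 then (act g⁻¹ (a 0), g⁻¹) else (a j, 1)

lemma tailProd_xiPair (g' : G) {m : ℕ} (a : Fin (m + 1) → A) (j : ℕ) :
    tailProd A G (xiPair k A G act g' a) j = if j = 0 then g'⁻¹ else 1 := by
  have hfn : (fun i : Fin (m + 1) => ((xiPair k A G act g' a) i).2)
      = (fun i : Fin (m + 1) => if (i : ℕ) = 0 then g'⁻¹ else (1 : G)) := by
    funext i
    simp only [xiPair]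
    split <;> rfl
  have hlist : (List.ofFn fun i : Fin (m + 1) => ((xiPair k A G act g' a) i).2)
      = g'⁻¹ :: List.replicate m (1 : G) := by
    rw [hfn, List.ofFn_succ]
    simp
  unfold tailProd
  rw [hlist]
  cases j with
  | zero => simp
  | succ n =>
    simp only [List.drop_succ_cons, Nat.succ_ne_zero, if_false]
    rw [List.drop_replicate]
    simp

lemma nuTup_xiPair (g' : G) {m : ℕ} (a : Fin (m + 1) → A) :
    nuTup k A G act (xiPair k A G act g' a)
      = fun w => if w = g' then tprod k a else 0 := by
  funext w
  unfold nuTup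
  have h0 : tailProd A G (xiPair k A G act g' a) 0 = g'⁻¹ := by
    rw [tailProd_xiPair]; rfl
  rw [h0, inv_inv]
  by_cases hw : w = g'
  · rw [if_pos hw, if_pos hw]
    refine congrArg (⇑(PiTensorProduct.tprod k)) (funext fun j => ?_)
    rw [tailProd_xiPair]
    simp only [xiPair]
    by_cases hj : (j : ℕ) = 0
    · have hj0 : j = 0 := by ext; exact hj
      subst hj0
      have hc : ∀ (x : G) (y : A), act x⁻¹ ((act x) y) = y := fun x y => by
        rw [map_inv]; exact (act x).symm_apply_apply y
      simpa using hc g'⁻¹ (a 0)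
    · simp [hj]
  · rw [if_neg hw, if_neg hw]

lemma gact_single (h : G) (g : G) {m : ℕ} (a : Fin (m + 1) → A) :
    gact k A G act h (fun w => if w = g then tprod k a else 0)
      = fun w => if w = h * g * h⁻¹ then tprod k (fun j => act h (a j)) else 0 := by
  funext w
  simp only [gact]
  have hiff : (h⁻¹ * w * h = g) ↔ (w = h * g * h⁻¹) := by
    constructor <;> intro hw <;> [skip; skip] <;>
      · subst hw; group
  by_cases hw : w = h * g * h⁻¹
  · rw [if_pos (hiff.mpr hw), if_pos hw, PiTensorProduct.map_tprod]
    rfl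
  · rw [if_neg (fun hc => hw (hiff.mp hc)), if_neg hw, map_zero]

lemma mk_gact (h : G) {ℓ : ℕ} (f : G → ⨂[k]^ℓ A) :
    Submodule.Quotient.mk (p := coinvSub k A G act ℓ) (gact k A G act h f)
      = Submodule.Quotient.mk (p := coinvSub k A G act ℓ) f := by
  rw [Submodule.Quotient.eq,
    show gact k A G act h f - f = -(f - gact k A G act h f) by abel]
  exact neg_mem (Submodule.subset_span ⟨h, f, rfl⟩)

/-- The composite `ν ∘ ξ`, where `ξ` is the symmetrization
`[x] ↦ (1/|G|) Σ_{h ∈ G} h·x` followed by `Σ_g ξ_g` and `ν` is the untwisting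
chain map, is the identity on the `G`-coinvariants
`(⊕_{g ∈ G} C_•(A; A_g))_G`: on the class of an elementary chain `a` in the
summand `g`, the result is again the class of that elementary chain. -/
theorem nu_comp_xi_eq_id (hG : Invertible ((Fintype.card G : k)))
    (m : ℕ) (g : G) (a : Fin (m + 1) → A) :
    Submodule.Quotient.mk (p := coinvSub k A G act (m + 1))
      (⅟(Fintype.card G : k) •
        ∑ h : G, nuTup k A G act (xiPair k A G act (h * g * h⁻¹) (fun j => act h (a j))))
    = Submodule.Quotient.mk (p := coinvSub k A G act (m + 1))
      (fun g' => if g' = g then tprod k a else 0) := by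
  set f0 : G → ⨂[k]^(m + 1) A := fun g' => if g' = g then tprod k a else 0 with hf0
  have hsum : (∑ h : G, nuTup k A G act
        (xiPair k A G act (h * g * h⁻¹) (fun j => act h (a j))))
      = ∑ h : G, gact k A G act h f0 := by
    refine Finset.sum_congr rfl fun h _ => ?_
    rw [nuTup_xiPair, hf0, gact_single]
  rw [hsum, ← Submodule.mkQ_apply, ← Submodule.mkQ_apply, map_smul, map_sum]
  have hterm : ∀ h : G, (coinvSub k A G act (m + 1)).mkQ (gact k A G act h f0)
      = (coinvSub k A G act (m + 1)).mkQ f0 := fun h => mk_gact k A G act h f0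
  rw [Finset.sum_congr rfl fun h _ => hterm h, Finset.sum_const, Finset.card_univ,
    ← Nat.cast_smul_eq_nsmul k, invOf_smul_smul]

end
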